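/- arXiv:1701.00141 — 4 statements merged into one kernel-verified Lean document; each statement's English description precedes it below -/
import Mathlib

section
/- Let Γ be a nontrivial finite group acting faithfully on a finite set X, let U be a set of representatives of the orbits of Γ on X, and let L = {σ ∈ Γ : σ·u = u for all u ∈ U} be the pointwise stabilizer of U. Then D_Γ(X) ≤ D_L(X) + 1, where L acts on X by restriction of the action of Γ. -/
/-- The distinguishing number of the action of `Γ` on `X` relative to a subgroup `H`:
the smallest number `d` of labels admitting a labeling `φ : X → Fin d` such that
every element of `Γ` preserving the labeling lies in `H`. -/
noncomputable def DRel (Γ : Type*) [Group Γ] (X : Type*) [MulAction Γ X] (H : Subgroup Γ) : ℕ :=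
  sInf {d : ℕ | ∃ φ : X → Fin d, ∀ g : Γ, (∀ x : X, φ (g • x) = φ x) → g ∈ H}

/-- The ordinary distinguishing number `D_Γ(X)`. -/
noncomputable def D (Γ : Type*) [Group Γ] (X : Type*) [MulAction Γ X] : ℕ :=
  DRel Γ X ⊥

theorem stmt_1 (Γ X : Type*) [Group Γ] [Finite Γ] [Nontrivial Γ] [MulAction Γ X]
    [FaithfulSMul Γ X] [Finite X]
    (U : Set X) (hU : ∀ x : X, ∃! u : X, u ∈ U ∧ u ∈ MulAction.orbit Γ x)
    (L : Subgroup Γ) (hL : ∀ σ : Γ, σ ∈ L ↔ ∀ u ∈ U, σ • u = u) :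
    D Γ X ≤ D ↥L X + 1 := by
  classical
  haveI : Fintype X := Fintype.ofFinite X
  -- the defining set for D L X is nonempty
  have hne : {d : ℕ | ∃ φ : X → Fin d, ∀ g : ↥L,
      (∀ x : X, φ (g • x) = φ x) → g ∈ (⊥ : Subgroup ↥L)}.Nonempty := by
    refine ⟨Fintype.card X, Fintype.equivFin X, fun g hg => ?_⟩
    have h1 : ∀ x : X, (g : Γ) • x = x := by
      intro x
      have := hg x
      have hx : g • x = x := (Fintype.equivFin X).injective this
      exact hx
    have hg1 : (g : Γ) = 1 := by
      apply FaithfulSMul.eq_of_smul_eq_smul (M := Γ) (α := X)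
      intro x; rw [h1 x, one_smul]
    rw [Subgroup.mem_bot, Subtype.ext_iff]
    exact hg1
  have hmem := Nat.sInf_mem hne
  obtain ⟨φ, hφ⟩ := hmem
  -- new labeling
  set ψ : X → Fin (D ↥L X + 1) :=
    fun x => if x ∈ U then Fin.last _ else (φ x).castSucc with hψ
  apply Nat.sInf_le
  refine ⟨ψ, fun g hg => ?_⟩
  -- g fixes U pointwise
  have hgU : ∀ u ∈ U, g • u = u := by
    intro u hu
    have h1 : ψ (g • u) = Fin.last _ := by rw [hg u]; simp [hψ, hu]
    have h2 : g • u ∈ U := by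
      by_contra h
      simp only [hψ, if_neg h, h, ↓reduceIte] at h1
      exact absurd h1 (Fin.castSucc_lt_last _).ne
    obtain ⟨w, _, hw⟩ := hU u
    have e1 := hw (g • u) ⟨h2, ⟨g, rfl⟩⟩
    have e2 := hw u ⟨hu, MulAction.mem_orbit_self u⟩
    rw [e1, e2]
  have hgL : g ∈ L := (hL g).2 hgU
  -- the restricted element preserves φ
  have hfix : ∀ x : X, φ ((⟨g, hgL⟩ : ↥L) • x) = φ x := by
    intro x
    have hsm : (⟨g, hgL⟩ : ↥L) • x = g • x := rfl
    rw [hsm]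
    by_cases hx : x ∈ U
    · rw [hgU x hx]
    · have hgx : g • x ∉ U := by
        intro h
        have := hg x
        simp only [hψ, if_pos h, if_neg hx, h, hx, ↓reduceIte] at this
        exact absurd this.symm (Fin.castSucc_lt_last _).ne
      have := hg x
      simp only [hψ, if_neg hx, if_neg hgx, hx, hgx, ↓reduceIte] at this
      exact Fin.castSucc_injective _ this
  have := hφ ⟨g, hgL⟩ hfix
  simpa [Subgroup.mem_bot, Subtype.ext_iff] using this
end

section
/- Let Γ be a finite group acting faithfully on a finite set X and let H ≤ Γ act on X by restriction. Suppose φ is a distinguishing labeling of X for the H-action with D_H(X) labels, and let σ₁,...,σ_k be the nonidentity elements of Γ that preserve φ. If the intersection ⋂_{i=1}^k m(σ_i) of their motion sets m(σ_i) = {x ∈ X : σ_i·x ≠ x} is nonempty, then D_Γ(X) ≤ D_H(X) + 1. -/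
theorem stmt_3 (Γ X : Type*) [Group Γ] [Finite Γ] [MulAction Γ X] [FaithfulSMul Γ X]
    [Finite X] (H : Subgroup Γ) (d k : ℕ) (hd : d = D ↥H X)
    (φ : X → Fin d) (hφ : ∀ h : H, (∀ x : X, φ (h • x) = φ x) → h = 1)
    (σ : Fin k → Γ) (hσ1 : ∀ i, σ i ≠ 1) (hσ2 : ∀ i, ∀ x : X, φ (σ i • x) = φ x)
    (hσ3 : ∀ g : Γ, g ≠ 1 → (∀ x : X, φ (g • x) = φ x) → ∃ i, g = σ i)
    (hmot : ∃ x : X, ∀ i, σ i • x ≠ x) :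
    D Γ X ≤ d + 1 := by
  classical
  obtain ⟨x₀, hx₀⟩ := hmot
  set ψ : X → Fin (d + 1) := fun x => if x = x₀ then Fin.last d else (φ x).castSucc with hψ
  have key : ∀ g : Γ, (∀ x : X, ψ (g • x) = ψ x) → g ∈ (⊥ : Subgroup Γ) := by
    intro g hg
    have hfix : g • x₀ = x₀ := by
      have h1 : ψ (g • x₀) = Fin.last d := by rw [hg x₀]; simp [hψ]
      by_contra hne
      simp only [hψ, if_neg hne] at h1
      exact absurd h1 (Fin.castSucc_lt_last _).ne
    have hpres : ∀ x : X, φ (g • x) = φ x := by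
      intro x
      by_cases hx : x = x₀
      · rw [hx, hfix]
      · have hgx : g • x ≠ x₀ := by
          intro h
          apply hx
          have := h.trans hfix.symm
          exact smul_left_cancel g this
        have := hg x
        simp only [hψ, if_neg hgx, if_neg hx] at this
        exact Fin.castSucc_injective _ this
    by_contra hne
    have hne1 : g ≠ 1 := by simpa using hne
    obtain ⟨i, hi⟩ := hσ3 g hne1 hpres
    exact hx₀ i (hi ▸ hfix)
  have : d + 1 ∈ {m : ℕ | ∃ φ : X → Fin m, ∀ g : Γ,
      (∀ x : X, φ (g • x) = φ x) → g ∈ (⊥ : Subgroup Γ)} := ⟨ψ, key⟩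
  exact Nat.sInf_le this
end

section
/- Let Γ be a finite group acting faithfully on a finite set X and let H ≤ Γ act on X by restriction. Suppose φ is a distinguishing labeling of X for the H-action with D_H(X) labels, and let σ₁,...,σ_k be the nonidentity elements of Γ preserving φ. If T = {I₁,...,I_t} is a partition of {1,...,k} such that ⋂_{i∈I_j} m(σ_i) ≠ ∅ for every j, then D_Γ(X) ≤ D_H(X) + t. -/
theorem stmt_4 (Γ X : Type*) [Group Γ] [Finite Γ] [MulAction Γ X] [FaithfulSMul Γ X]
    [Finite X] (H : Subgroup Γ) (d k : ℕ) (hd : d = D ↥H X)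
    (φ : X → Fin d) (hφ : ∀ h : H, (∀ x : X, φ (h • x) = φ x) → h = 1)
    (σ : Fin k → Γ) (hσ1 : ∀ i, σ i ≠ 1) (hσ2 : ∀ i, ∀ x : X, φ (σ i • x) = φ x)
    (hσ3 : ∀ g : Γ, g ≠ 1 → (∀ x : X, φ (g • x) = φ x) → ∃ i, g = σ i)
    (t : ℕ) (p : Fin k → Fin t) (hsurj : Function.Surjective p)
    (hblk : ∀ j : Fin t, ∃ x : X, ∀ i, p i = j → σ i • x ≠ x) :
    D Γ X ≤ d + t := by
  classical
  -- witnesses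
  set w : Fin t → X := fun j => (hblk j).choose with hw
  have hwspec : ∀ j, ∀ i, p i = j → σ i • w j ≠ w j := fun j => (hblk j).choose_spec
  -- new labeling
  set ψ : X → Fin (d + t) := fun x =>
    if h : ∃ j, w j = x then Fin.natAdd d h.choose else Fin.castAdd t (φ x) with hψ
  have key : d + t ∈ {n : ℕ | ∃ φ : X → Fin n, ∀ g : Γ,
      (∀ x : X, φ (g • x) = φ x) → g ∈ (⊥ : Subgroup Γ)} := by
    refine ⟨ψ, fun g hg => ?_⟩
    simp only [Subgroup.mem_bot]
    by_contra hg1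
    -- g fixes every witness point
    have hfix : ∀ x : X, (∃ j, w j = x) → g • x = x := by
      intro x hx
      have h1 : ψ (g • x) = ψ x := hg x
      have hx' : ψ x = Fin.natAdd d hx.choose := by simp [hψ, dif_pos hx]
      have hgx : ∃ j, w j = g • x := by
        by_contra hgx
        rw [hx'] at h1
        have : ψ (g • x) = Fin.castAdd t (φ (g • x)) := by simp [hψ, dif_neg hgx]
        rw [this] at h1
        have hv : (φ (g • x)).val = d + hx.choose.val := congrArg Fin.val h1
        have : (φ (g • x)).val < d := (φ (g • x)).isLt
        omega
      have h2 : ψ (g • x) = Fin.natAdd d hgx.choose := by simp [hψ, dif_pos hgx]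
      rw [h2, hx'] at h1
      have hjj : hgx.choose = hx.choose := by
        have := congrArg Fin.val h1
        simp only [Fin.natAdd] at this
        exact Fin.ext (by omega)
      calc g • x = w hgx.choose := (hgx.choose_spec).symm
        _ = w hx.choose := by rw [hjj]
        _ = x := hx.choose_spec
    -- g preserves φ
    have hpres : ∀ x : X, φ (g • x) = φ x := by
      intro x
      by_cases hx : ∃ j, w j = x
      · rw [hfix x hx]
      · have h1 : ψ (g • x) = ψ x := hg x
        have hx' : ψ x = Fin.castAdd t (φ x) := by simp [hψ, dif_neg hx]
        have hgx : ¬ ∃ j, w j = g • x := by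
          intro hgx
          have : ψ (g • x) = Fin.natAdd d hgx.choose := by simp [hψ, dif_pos hgx]
          rw [this, hx'] at h1
          have hv := congrArg Fin.val h1
          simp only [Fin.natAdd, Fin.castAdd, Fin.castLE] at hv
          have : (φ x).val < d := (φ x).isLt
          omega
        have h2 : ψ (g • x) = Fin.castAdd t (φ (g • x)) := by simp [hψ, dif_neg hgx]
        rw [h2, hx'] at h1
        exact Fin.ext (by simpa using congrArg Fin.val h1)
    obtain ⟨i, hi⟩ := hσ3 g hg1 hpres
    have := hwspec (p i) i rfl
    exact this (by rw [← hi]; exact hfix (w (p i)) ⟨p i, rfl⟩)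
  exact Nat.sInf_le key
end

section
/- Let Γ be a group of order k+1 acting faithfully on a finite set X, with nonidentity elements σ₁,...,σ_k. If t is the minimum size of a partition T = {I₁,...,I_t} of {1,...,k} such that ⋂_{i∈I_j} m(σ_i) ≠ ∅ for all j, then D_Γ(X) ≤ 1 + t. -/
theorem stmt_5 (Γ X : Type*) [Group Γ] [Finite Γ] [MulAction Γ X] [FaithfulSMul Γ X]
    [Finite X] (k : ℕ) (hcard : Nat.card Γ = k + 1)
    (σ : Fin k → Γ) (hinj : Function.Injective σ) (hσ1 : ∀ i, σ i ≠ 1)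
    (hσ2 : ∀ g : Γ, g ≠ 1 → ∃ i, g = σ i)
    (t : ℕ)
    (ht : IsLeast {t' : ℕ | ∃ p : Fin k → Fin t', Function.Surjective p ∧
      ∀ j : Fin t', ∃ x : X, ∀ i, p i = j → σ i • x ≠ x} t) :
    D Γ X ≤ 1 + t := by
  obtain ⟨p, hsurj, hx⟩ := ht.1
  classical
  choose x hxmove using hx
  refine Nat.sInf_le ?_
  refine ⟨fun y => if h : ∃ j : Fin t, x j = y then ⟨h.choose.val + 1, by omega⟩
    else ⟨0, by omega⟩, ?_⟩
  intro g hg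
  by_contra hg1
  simp only [Subgroup.mem_bot] at hg1
  obtain ⟨i, rfl⟩ := hσ2 g hg1
  set j := p i with hj
  have hmove : σ i • x j ≠ x j := hxmove j i rfl
  have := hg (x j)
  beta_reduce at this
  have h1 : ∃ j' : Fin t, x j' = x j := ⟨j, rfl⟩
  rw [dif_pos h1] at this
  by_cases h2 : ∃ j' : Fin t, x j' = σ i • x j
  · rw [dif_pos h2, Fin.mk.injEq] at this
    have hc : h2.choose = h1.choose := Fin.ext (by omega)
    have e1 := h2.choose_spec
    have e2 := h1.choose_spec
    rw [hc, e2] at e1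
    exact hmove e1.symm
  · rw [dif_neg h2, Fin.mk.injEq] at this
    omega
end
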